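/- Let X be a T0 space and A an irreducible closed subset of X. If {◇U_i : i ∈ I} is an open neighborhood base at the point A in the sobrification X^s (where U_i are open in X), then A is a minimal closed set of X meeting every U_i. -/

import Mathlib

/-- The points of the sobrification: irreducible closed subsets of `X`. -/
def IrrC (X : Type*) [TopologicalSpace X] := {A : Set X // IsIrreducible A ∧ IsClosed A}

/-- The topology of the sobrification `X^s`, generated by the sets
`◇U = {F : F ∩ U ≠ ∅}` for `U` open in `X`. -/
def sobTop (X : Type*) [TopologicalSpace X] : TopologicalSpace (IrrC X) :=
  TopologicalSpace.generateFrom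
    {s : Set (IrrC X) | ∃ U : Set X, IsOpen U ∧ s = {F : IrrC X | (F.1 ∩ U).Nonempty}}

/-- If `{◇Uᵢ}` is a neighborhood base at the point `A` of the sobrification `X^s`, then
`A` is a minimal closed set of `X` meeting every `Uᵢ`. -/
theorem stmt12 {X : Type*} [TopologicalSpace X] [T0Space X] (A : Set X)
    (hirr : IsIrreducible A) (hcl : IsClosed A)
    {ι : Type*} (U : ι → Set X) (hop : ∀ i, IsOpen (U i))
    (hbasis : (@nhds (IrrC X) (sobTop X) ⟨A, hirr, hcl⟩).HasBasis (fun _ : ι => True)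
      (fun i => {F : IrrC X | (F.1 ∩ U i).Nonempty})) :
    (∀ i, (A ∩ U i).Nonempty) ∧
      ∀ B : Set X, B ⊆ A → IsClosed B → (∀ i, (B ∩ U i).Nonempty) → B = A := by
  have hmeet : ∀ i, (A ∩ U i).Nonempty := by
    intro i
    have h : (⟨A, hirr, hcl⟩ : IrrC X) ∈ {F : IrrC X | (F.1 ∩ U i).Nonempty} :=
      @mem_of_mem_nhds (IrrC X) (sobTop X) _ _ (hbasis.mem_of_mem (i := i) trivial)
    exact h
  refine ⟨hmeet, fun B hBA hBcl hBU => ?_⟩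
  by_contra hne
  obtain ⟨x, hxA, hxB⟩ : (A \ B).Nonempty := by
    rw [Set.diff_nonempty]; intro h; exact hne (le_antisymm hBA h)
  -- ◇(Bᶜ) is an open nbhd of A
  have hV : IsOpen Bᶜ := hBcl.isOpen_compl
  have hdopen : sobTop X |>.IsOpen {F : IrrC X | (F.1 ∩ Bᶜ).Nonempty} :=
    TopologicalSpace.isOpen_generateFrom_of_mem ⟨Bᶜ, hV, rfl⟩
  have hmemnhds : {F : IrrC X | (F.1 ∩ Bᶜ).Nonempty} ∈
      @nhds (IrrC X) (sobTop X) ⟨A, hirr, hcl⟩ :=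
    @IsOpen.mem_nhds (IrrC X) (sobTop X) _ _ hdopen ⟨x, hxA, hxB⟩
  obtain ⟨i, -, hsub⟩ := hbasis.mem_iff.mp hmemnhds
  obtain ⟨y, hyB, hyU⟩ := hBU i
  have hcly : IsIrreducible (closure {y}) ∧ IsClosed (closure {y}) :=
    ⟨isIrreducible_singleton.closure, isClosed_closure⟩
  have hmem : (⟨closure {y}, hcly⟩ : IrrC X) ∈ {F : IrrC X | (F.1 ∩ U i).Nonempty} :=
    ⟨y, subset_closure rfl, hyU⟩
  obtain ⟨z, hz1, hz2⟩ := hsub hmem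
  exact hz2 (hBcl.closure_subset_iff.mpr (Set.singleton_subset_iff.mpr hyB) hz1)
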